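/- Let n ∈ ℕ with n ≥ 1 and k ∈ ℝ with k ≥ 0 and kn − n/2 > −1/2. For every ℓ ∈ ℕ with ℓ ≥ 1 there exist real constants c_{1,ℓ}, …, c_{ℓ,ℓ} (depending only on k, n, ℓ) such that for all x, y ∈ ℝ with xy ≠ 0, the ℓ-th iterate of the Euler operator x ∂/∂x (acting in the variable x) satisfies (x ∂/∂x)^ℓ j_{kn−n/2}(n|xy|^{1/n}) = Σ_{j=1}^ℓ c_{j,ℓ} |xy|^{2j/n} j_{kn−n/2+j}(n|xy|^{1/n}). -/

import Mathlib

open MeasureTheory Real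
open scoped ENNReal NNReal

noncomputable section

/-- Euler operator `g ↦ x g'(x)` on real-valued functions. -/
def eulerR (f : ℝ → ℝ) (x : ℝ) : ℝ := x * deriv f x

/-- The normalized Bessel function `j_ν`. -/
def besselJ (ν : ℝ) (z : ℝ) : ℝ :=
  Real.Gamma (ν + 1) *
    ∑' m : ℕ, ((-1 : ℝ) ^ m / ((m.factorial : ℝ) * Real.Gamma (ν + (m : ℝ) + 1))) *
      (z / 2) ^ (2 * m)

namespace BesselAux

/-- The coefficients of the Bessel series. -/
def a (ν : ℝ) (m : ℕ) : ℝ :=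
  (-1 : ℝ) ^ m / ((m.factorial : ℝ) * Real.Gamma (ν + (m : ℝ) + 1))

lemma arg_pos {ν : ℝ} (hν : -1 < ν) (m : ℕ) : 0 < ν + (m : ℝ) + 1 := by
  have : (0:ℝ) ≤ m := Nat.cast_nonneg m
  linarith

lemma gamma_pos {ν : ℝ} (hν : -1 < ν) (m : ℕ) : 0 < Real.Gamma (ν + (m : ℝ) + 1) :=
  Real.Gamma_pos_of_pos (arg_pos hν m)

lemma abs_a {ν : ℝ} (hν : -1 < ν) (m : ℕ) :
    |a ν m| = 1 / ((m.factorial : ℝ) * Real.Gamma (ν + (m : ℝ) + 1)) := by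
  have h1 : (0:ℝ) < (m.factorial : ℝ) := by positivity
  have h2 := gamma_pos hν m
  rw [a, abs_div, abs_pow, abs_neg, abs_one, one_pow, abs_of_pos (by positivity)]

lemma gamma_succ {ν : ℝ} (hν : -1 < ν) (m : ℕ) :
    Real.Gamma (ν + ((m+1 : ℕ) : ℝ) + 1) = (ν + (m:ℝ) + 1) * Real.Gamma (ν + (m:ℝ) + 1) := by
  have h := Real.Gamma_add_one (arg_pos hν m).ne'
  rw [show ν + ((m+1 : ℕ) : ℝ) + 1 = (ν + (m:ℝ) + 1) + 1 by push_cast; ring, h]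

lemma a_succ {ν : ℝ} (hν : -1 < ν) (m : ℕ) :
    a ν (m+1) * ((m:ℝ)+1) = - a (ν+1) m := by
  have h2 := gamma_pos hν m
  have hg : Real.Gamma (ν + ((m+1 : ℕ) : ℝ) + 1) = (ν + (m:ℝ) + 1) * Real.Gamma (ν + (m:ℝ) + 1) :=
    gamma_succ hν m
  have hg2 : Real.Gamma (ν + 1 + (m:ℝ) + 1) = Real.Gamma (ν + ((m+1 : ℕ) : ℝ) + 1) := by
    norm_num; ring_nf
  rw [a, a, hg2, hg]
  have hfac : ((m+1).factorial : ℝ) = ((m:ℝ)+1) * (m.factorial : ℝ) := by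
    rw [Nat.factorial_succ]; push_cast; ring
  rw [hfac, pow_succ]
  have h3 : (0:ℝ) < (m.factorial : ℝ) := by positivity
  have h4 : (0:ℝ) < (m:ℝ) + 1 := by positivity
  have h5 := arg_pos hν m
  field_simp

lemma gamma_ge {ν : ℝ} (hν : -1 < ν) (m : ℕ) (hm : 1 ≤ m) :
    Real.Gamma (ν + 2) ≤ Real.Gamma (ν + (m:ℝ) + 1) := by
  induction m with
  | zero => omega
  | succ p ih =>
    rcases Nat.eq_or_lt_of_le hm with h | h
    · rw [show ν + ((p+1 : ℕ) : ℝ) + 1 = ν + 2 by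
        have : p = 0 := by omega
        subst this; push_cast; ring]
    · have hp : 1 ≤ p := by omega
      have h1 := ih hp
      have h2 : (1:ℝ) ≤ ν + (p:ℝ) + 1 := by
        have : (1:ℝ) ≤ (p:ℝ) := by exact_mod_cast hp
        linarith
      have h3 := gamma_pos hν p
      calc Real.Gamma (ν + 2) ≤ Real.Gamma (ν + (p:ℝ) + 1) := h1
        _ ≤ (ν + (p:ℝ) + 1) * Real.Gamma (ν + (p:ℝ) + 1) := le_mul_of_one_le_left h3.le h2
        _ = Real.Gamma (ν + ((p+1 : ℕ) : ℝ) + 1) := (gamma_succ hν p).symm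

lemma a_bound {ν : ℝ} (hν : -1 < ν) :
    ∃ K : ℝ, 0 ≤ K ∧ ∀ m : ℕ, |a ν m| ≤ K / (m.factorial : ℝ) := by
  have hg1 : 0 < Real.Gamma (ν + 1) := Real.Gamma_pos_of_pos (by linarith)
  have hg2 : 0 < Real.Gamma (ν + 2) := Real.Gamma_pos_of_pos (by linarith)
  refine ⟨max (1 / Real.Gamma (ν + 1)) (1 / Real.Gamma (ν + 2)), le_max_of_le_left (by positivity), fun m => ?_⟩
  rw [abs_a hν]
  rcases Nat.eq_zero_or_pos m with h | h
  · subst h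
    simp only [Nat.factorial_zero, Nat.cast_one, Nat.cast_zero, one_mul, div_one]
    rw [show ν + (0:ℝ) + 1 = ν + 1 by ring]
    exact le_max_of_le_left le_rfl
  · have hge := gamma_ge hν m h
    have hfac : (0:ℝ) < (m.factorial : ℝ) := by positivity
    have h1 : 1 / ((m.factorial : ℝ) * Real.Gamma (ν + (m:ℝ) + 1))
        ≤ 1 / ((m.factorial : ℝ) * Real.Gamma (ν + 2)) := by
      apply one_div_le_one_div_of_le (by positivity)
      exact mul_le_mul_of_nonneg_left hge hfac.le
    calc 1 / ((m.factorial : ℝ) * Real.Gamma (ν + (m:ℝ) + 1))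
        ≤ 1 / ((m.factorial : ℝ) * Real.Gamma (ν + 2)) := h1
      _ = (1 / Real.Gamma (ν + 2)) / (m.factorial : ℝ) := by field_simp
      _ ≤ max (1 / Real.Gamma (ν + 1)) (1 / Real.Gamma (ν + 2)) / (m.factorial : ℝ) := by
          gcongr
          exact le_max_right _ _



lemma summable_terms {ν : ℝ} (hν : -1 < ν) (z : ℝ) :
    Summable (fun m : ℕ => a ν m * (z/2)^(2*m)) := by
  obtain ⟨K, hK, hKb⟩ := a_bound hν
  apply Summable.of_norm_bounded (g := fun m => K * (z^2/4)^m / (m.factorial : ℝ))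
  · simpa [mul_div_assoc] using (Real.summable_pow_div_factorial (z^2/4)).mul_left K
  · intro m
    have h1 : ((z/2 : ℝ))^(2*m) = (z^2/4)^m := by
      rw [pow_mul]; congr 1; ring
    have habs : |((z/2 : ℝ))^(2*m)| = (z^2/4)^m := by
      rw [h1]; exact abs_of_nonneg (by positivity)
    calc ‖a ν m * (z/2)^(2*m)‖ = |a ν m| * |((z/2:ℝ))^(2*m)| := by
          rw [Real.norm_eq_abs, abs_mul]
      _ = |a ν m| * (z^2/4)^m := by rw [habs]
      _ ≤ (K / (m.factorial : ℝ)) * (z^2/4)^m :=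
          mul_le_mul_of_nonneg_right (hKb m) (by positivity)
      _ = K * (z^2/4)^m / (m.factorial : ℝ) := by ring

lemma besselJ_hasDerivAt {ν : ℝ} (hν : -1 < ν) (z : ℝ) :
    HasDerivAt (besselJ ν) (-(z / (2*(ν+1))) * besselJ (ν+1) z) z := by
  obtain ⟨K, hK, hKb⟩ := a_bound hν
  set R : ℝ := |z| + 1 with hR
  have hR1 : (1:ℝ) ≤ R := by rw [hR]; linarith [abs_nonneg z]
  set g : ℕ → ℝ → ℝ := fun m t => a ν m * (t/2)^(2*m) with hg
  set g' : ℕ → ℝ → ℝ := fun m t => a ν m * (m:ℝ) * (t/2)^(2*m-1) with hg'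
  set u : ℕ → ℝ := fun m => K * (2*R^2)^m / (m.factorial : ℝ) with hu
  have hu_sum : Summable u := by
    simpa [hu, mul_div_assoc] using (Real.summable_pow_div_factorial (2*R^2)).mul_left K
  have hderiv : ∀ (m : ℕ) (t : ℝ), HasDerivAt (g m) (g' m t) t := by
    intro m t
    have h1 : HasDerivAt (fun s : ℝ => s/2) (1/2) t := (hasDerivAt_id t).div_const 2
    have h3 := (h1.pow (2*m)).const_mul (a ν m)
    refine h3.congr_deriv (Eq.symm ?_)
    simp only [hg']
    push_cast
    ring
  have hbound : ∀ (m : ℕ), ∀ t ∈ Metric.ball (0:ℝ) R, ‖g' m t‖ ≤ u m := by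
    intro m t ht
    rw [Metric.mem_ball, Real.dist_eq, sub_zero] at ht
    rcases Nat.eq_zero_or_pos m with h | h
    · subst h
      simp only [hg', hu, Nat.cast_zero, mul_zero, zero_mul, norm_zero, pow_zero,
        Nat.factorial_zero, Nat.cast_one, mul_one]
      positivity
    · have e1 : |t/2| ≤ R := by
        rw [abs_div]
        have : |t| ≤ R := ht.le
        have h2 : (0:ℝ) < |(2:ℝ)| := by norm_num
        calc |t|/|(2:ℝ)| ≤ |t| := by rw [abs_two]; linarith [abs_nonneg t]
          _ ≤ R := this
      have e2 : |t/2|^(2*m-1) ≤ R^(2*m) := by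
        calc |t/2|^(2*m-1) ≤ R^(2*m-1) := pow_le_pow_left₀ (abs_nonneg _) e1 _
          _ ≤ R^(2*m) := pow_le_pow_right₀ hR1 (Nat.sub_le _ _)
      have e3 : (m:ℝ) ≤ 2^m := by exact_mod_cast (Nat.lt_two_pow_self (n := m)).le
      calc ‖g' m t‖ = |a ν m| * (m:ℝ) * |t/2|^(2*m-1) := by
            rw [hg', Real.norm_eq_abs, abs_mul, abs_mul, abs_pow, Nat.abs_cast]
        _ ≤ (K / (m.factorial : ℝ)) * (2:ℝ)^m * R^(2*m) := by
            have hf : (0:ℝ) < (m.factorial : ℝ) := by positivity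
            apply mul_le_mul (mul_le_mul (hKb m) e3 (Nat.cast_nonneg m) (by positivity))
              e2 (by positivity) (by positivity)
        _ = u m := by
            simp only [hu]
            rw [mul_pow, ← pow_mul]
            ring
  have hz : z ∈ Metric.ball (0:ℝ) R := by
    rw [Metric.mem_ball, Real.dist_eq, sub_zero]; simp [hR]
  have HD : HasDerivAt (fun t => ∑' m, g m t) (∑' m, g' m z) z :=
    hasDerivAt_tsum_of_isPreconnected hu_sum Metric.isOpen_ball
      (convex_ball (0:ℝ) R).isPreconnected (fun m y _ => hderiv m y) hbound hz
      (summable_terms hν z) hz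
  have hsum' : Summable (fun m => g' m z) :=
    Summable.of_norm_bounded hu_sum (fun m => hbound m z hz)
  have h0 : g' 0 z = 0 := by simp [hg']
  have hstep : ∀ m : ℕ, g' (m+1) z = -(z/2) * (a (ν+1) m * (z/2)^(2*m)) := by
    intro m
    simp only [hg']
    rw [show 2*(m+1)-1 = 2*m+1 from by omega, pow_succ]
    push_cast
    linear_combination ((z/2)^(2*m) * (z/2)) * (a_succ hν m)
  have htsum : ∑' m, g' m z = -(z/2) * ∑' m, a (ν+1) m * (z/2)^(2*m) := by
    rw [Summable.tsum_eq_zero_add hsum', h0, zero_add, tsum_congr hstep, tsum_mul_left]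
  have hfun : besselJ ν = fun t => Real.Gamma (ν+1) * ∑' m, g m t := by funext t; rfl
  rw [hfun]
  have H2 := HD.const_mul (Real.Gamma (ν+1))
  refine H2.congr_deriv (Eq.symm ?_)
  rw [htsum]
  have hb1 : besselJ (ν+1) z = Real.Gamma (ν+1+1) * ∑' m, a (ν+1) m * (z/2)^(2*m) := rfl
  have hne : ν + 1 ≠ 0 := by
    have : (0:ℝ) < ν + 1 := by linarith
    exact this.ne'
  rw [hb1, Real.Gamma_add_one hne]
  field_simp


lemma abs_rpow_hasDerivAt {y : ℝ} (hy : y ≠ 0) (q : ℝ) {x : ℝ} (hx : x ≠ 0) :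
    HasDerivAt (fun t => |t * y| ^ q) (q * |x * y| ^ q / x) x := by
  have hy' : (0:ℝ) < |y| := abs_pos.mpr hy
  have hxy : (0:ℝ) < |x * y| := abs_pos.mpr (mul_ne_zero hx hy)
  rcases hx.lt_or_gt with hneg | hpos
  · have habs : |x * y| = x * (-|y|) := by rw [abs_mul, abs_of_neg hneg]; ring
    have hb : (0:ℝ) < x * (-|y|) := habs ▸ hxy
    have hinner : HasDerivAt (fun t : ℝ => t * (-|y|)) (-|y|) x := hasDerivAt_mul_const _
    have houter := Real.hasDerivAt_rpow_const (x := x * (-|y|)) (p := q) (Or.inl hb.ne')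
    have hcomp := HasDerivAt.comp x houter hinner
    have hev : (fun t : ℝ => |t * y| ^ q) =ᶠ[nhds x]
        (fun t : ℝ => (t * (-|y|)) ^ q) := by
      filter_upwards [eventually_lt_nhds hneg] with t ht
      rw [abs_mul, abs_of_neg ht]; ring_nf
    have hfinal := hcomp.congr_of_eventuallyEq hev
    refine hfinal.congr_deriv (Eq.symm ?_)
    rw [habs, Real.rpow_sub hb, Real.rpow_one]
    field_simp
  · have habs : |x * y| = x * |y| := by rw [abs_mul, abs_of_pos hpos]
    have hb : (0:ℝ) < x * |y| := habs ▸ hxy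
    have hinner : HasDerivAt (fun t : ℝ => t * |y|) |y| x := hasDerivAt_mul_const _
    have houter := Real.hasDerivAt_rpow_const (x := x * |y|) (p := q) (Or.inl hb.ne')
    have hcomp := HasDerivAt.comp x houter hinner
    have hev : (fun t : ℝ => |t * y| ^ q) =ᶠ[nhds x]
        (fun t : ℝ => (t * |y|) ^ q) := by
      filter_upwards [eventually_gt_nhds hpos] with t ht
      rw [abs_mul, abs_of_pos ht]
    have hfinal := hcomp.congr_of_eventuallyEq hev
    refine hfinal.congr_deriv (Eq.symm ?_)
    rw [habs, Real.rpow_sub hb, Real.rpow_one]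
    field_simp

lemma comp_hasDerivAt {ν : ℝ} (hν : -1 < ν) (n : ℕ) (hn : 1 ≤ n) {x y : ℝ}
    (hx : x ≠ 0) (hy : y ≠ 0) :
    HasDerivAt (fun t : ℝ => besselJ ν ((n:ℝ) * |t * y| ^ (1/(n:ℝ))))
      (-((n:ℝ) / (2*(ν+1))) * |x * y| ^ (2/(n:ℝ)) *
        besselJ (ν+1) ((n:ℝ) * |x * y| ^ (1/(n:ℝ))) / x) x := by
  have hn0 : ((n:ℝ)) ≠ 0 := Nat.cast_ne_zero.mpr (by omega)
  have hν1 : ν + 1 ≠ 0 := by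
    have : (0:ℝ) < ν + 1 := by linarith
    exact this.ne'
  have hxy : (0:ℝ) < |x * y| := abs_pos.mpr (mul_ne_zero hx hy)
  have hinner : HasDerivAt (fun t : ℝ => (n:ℝ) * |t * y| ^ (1/(n:ℝ)))
      ((n:ℝ) * ((1/(n:ℝ)) * |x * y| ^ (1/(n:ℝ)) / x)) x :=
    (abs_rpow_hasDerivAt hy (1/(n:ℝ)) hx).const_mul _
  have houter := besselJ_hasDerivAt hν ((n:ℝ) * |x * y| ^ (1/(n:ℝ)))
  have hcomp := HasDerivAt.comp x houter hinner
  refine hcomp.congr_deriv (Eq.symm ?_)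
  have hr : |x * y| ^ (1/(n:ℝ)) * |x * y| ^ (1/(n:ℝ)) = |x * y| ^ (2/(n:ℝ)) := by
    rw [← Real.rpow_add hxy]
    congr 1
    ring
  rw [← hr]
  field_simp

lemma prod_hasDerivAt {μ : ℝ} (hμ : -1 < μ) (n : ℕ) (hn : 1 ≤ n) (q : ℝ) {x y : ℝ}
    (hx : x ≠ 0) (hy : y ≠ 0) :
    HasDerivAt (fun t : ℝ => |t * y| ^ q * besselJ μ ((n:ℝ) * |t * y| ^ (1/(n:ℝ))))
      ((q * |x * y| ^ q * besselJ μ ((n:ℝ) * |x * y| ^ (1/(n:ℝ)))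
        - (n:ℝ)/(2*(μ+1)) * (|x * y| ^ q * |x * y| ^ (2/(n:ℝ)))
            * besselJ (μ+1) ((n:ℝ) * |x * y| ^ (1/(n:ℝ)))) / x) x := by
  have h1 := abs_rpow_hasDerivAt hy q hx
  have h2 := comp_hasDerivAt hμ n hn hx hy
  have h3 := h1.mul h2
  refine h3.congr_deriv (Eq.symm ?_)
  ring


lemma sum_shift {ℓ : ℕ} (hℓ : 1 ≤ ℓ) (c q b G : ℕ → ℝ) :
    ∑ j ∈ Finset.Icc 1 (ℓ+1),
      ((if j ≤ ℓ then c j * q j else 0)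
        + (if 2 ≤ j then -(c (j-1) * b (j-1)) else 0)) * G j
    = ∑ j ∈ Finset.Icc 1 ℓ, c j * (q j * G j - b j * G (j+1)) := by
  have h1 : ∀ j : ℕ, ((if j ≤ ℓ then c j * q j else 0)
      + (if 2 ≤ j then -(c (j-1) * b (j-1)) else 0)) * G j
      = (if j ≤ ℓ then c j * q j else 0) * G j
        + (if 2 ≤ j then -(c (j-1) * b (j-1)) else 0) * G j := fun j => add_mul _ _ _
  rw [Finset.sum_congr rfl fun j _ => h1 j, Finset.sum_add_distrib]
  have h2 : ∑ j ∈ Finset.Icc 1 (ℓ+1), (if j ≤ ℓ then c j * q j else 0) * G j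
      = ∑ j ∈ Finset.Icc 1 ℓ, c j * q j * G j := by
    rw [Finset.sum_Icc_succ_top (by omega : 1 ≤ ℓ+1), if_neg (by omega), zero_mul, add_zero]
    refine Finset.sum_congr rfl fun j hj => ?_
    rw [Finset.mem_Icc] at hj
    rw [if_pos hj.2]
  have h3 : ∑ j ∈ Finset.Icc 1 (ℓ+1), (if 2 ≤ j then -(c (j-1) * b (j-1)) else 0) * G j
      = ∑ j ∈ Finset.Icc 1 ℓ, -(c j * b j) * G (j+1) := by
    have hsub : Finset.Icc 2 (ℓ+1) ⊆ Finset.Icc 1 (ℓ+1) :=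
      Finset.Icc_subset_Icc (by omega) le_rfl
    have hzero : ∀ j ∈ Finset.Icc 1 (ℓ+1), j ∉ Finset.Icc 2 (ℓ+1) →
        (if 2 ≤ j then -(c (j-1) * b (j-1)) else 0) * G j = 0 := by
      intro j hj hnot
      rw [Finset.mem_Icc] at hj
      have : ¬ 2 ≤ j := by
        intro h2j
        exact hnot (Finset.mem_Icc.mpr ⟨h2j, hj.2⟩)
      rw [if_neg this, zero_mul]
    rw [← Finset.sum_subset hsub hzero]
    symm
    refine Finset.sum_nbij' (fun j => j + 1) (fun j => j - 1) ?_ ?_ ?_ ?_ ?_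
    · intro a ha; simp only [Finset.mem_Icc] at *; omega
    · intro a ha; simp only [Finset.mem_Icc] at *; omega
    · intro a ha; omega
    · intro a ha; simp only [Finset.mem_Icc] at ha; omega
    · intro a ha
      rw [Finset.mem_Icc] at ha
      rw [if_pos (by omega : 2 ≤ a + 1), Nat.add_sub_cancel]
  rw [h2, h3, ← Finset.sum_add_distrib]
  exact Finset.sum_congr rfl fun j hj => by ring

end BesselAux

/-- Iterates of the Euler operator applied to `j_{kn-n/2}(n|xy|^{1/n})` (in `x`) are
linear combinations `Σ_{j=1}^ℓ c_{j,ℓ} |xy|^{2j/n} j_{kn-n/2+j}(n|xy|^{1/n})`. -/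
theorem euler_iterate_besselJ_even (n : ℕ) (hn : 1 ≤ n) (k : ℝ) (hk : 0 ≤ k)
    (hkn : k * n - (n : ℝ) / 2 > -(1 / 2)) (ℓ : ℕ) (hℓ : 1 ≤ ℓ) :
    ∃ c : ℕ → ℝ, ∀ x y : ℝ, x * y ≠ 0 →
      (eulerR)^[ℓ]
          (fun t : ℝ => besselJ (k * n - (n : ℝ) / 2) ((n : ℝ) * |t * y| ^ (1 / (n : ℝ)))) x =
        ∑ j ∈ Finset.Icc 1 ℓ, c j * |x * y| ^ (2 * (j : ℝ) / (n : ℝ)) *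
          besselJ (k * n - (n : ℝ) / 2 + j) ((n : ℝ) * |x * y| ^ (1 / (n : ℝ))) := by
  have hn0 : ((n:ℝ)) ≠ 0 := Nat.cast_ne_zero.mpr (by omega)
  set ν : ℝ := k * n - (n : ℝ) / 2 with hνdef
  have hν : -1 < ν := lt_trans (by norm_num) hkn
  have hνj : ∀ j : ℕ, -1 < ν + (j:ℝ) := fun j => by
    have : (0:ℝ) ≤ (j:ℝ) := Nat.cast_nonneg j
    linarith
  induction ℓ, hℓ using Nat.le_induction with
  | base =>
    refine ⟨fun _ => -((n:ℝ)/(2*(ν+1))), fun x y hxy => ?_⟩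
    have hx : x ≠ 0 := fun h => hxy (by simp [h])
    have hy : y ≠ 0 := fun h => hxy (by simp [h])
    have hD := BesselAux.comp_hasDerivAt hν n hn hx hy
    rw [Function.iterate_one]
    simp only [eulerR]
    rw [hD.deriv, Finset.Icc_self, Finset.sum_singleton]
    push_cast
    rw [show 2 * (1:ℝ) / (n:ℝ) = 2/(n:ℝ) by ring]
    rw [mul_comm x, div_mul_cancel₀ _ hx]
  | succ ℓ hℓ' IH =>
    obtain ⟨c, hc⟩ := IH
    refine ⟨fun j => (if j ≤ ℓ then c j * (2*(j:ℝ)/(n:ℝ)) else 0)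
        + (if 2 ≤ j then -(c (j-1) * ((n:ℝ)/(2*(ν+((j-1:ℕ):ℝ)+1)))) else 0),
      fun x y hxy => ?_⟩
    have hx : x ≠ 0 := fun h => hxy (by simp [h])
    have hy : y ≠ 0 := fun h => hxy (by simp [h])
    have hxy' : (0:ℝ) < |x * y| := abs_pos.mpr hxy
    have hder : ∀ j ∈ Finset.Icc 1 ℓ, HasDerivAt
        (fun t : ℝ => c j * (|t * y| ^ (2*(j:ℝ)/(n:ℝ)) *
          besselJ (ν + (j:ℝ)) ((n:ℝ) * |t * y| ^ (1/(n:ℝ)))))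
        (c j * ((2*(j:ℝ)/(n:ℝ) * |x * y| ^ (2*(j:ℝ)/(n:ℝ)) *
            besselJ (ν + (j:ℝ)) ((n:ℝ) * |x * y| ^ (1/(n:ℝ)))
          - (n:ℝ)/(2*((ν + (j:ℝ))+1)) *
              (|x * y| ^ (2*(j:ℝ)/(n:ℝ)) * |x * y| ^ (2/(n:ℝ)))
            * besselJ ((ν + (j:ℝ))+1) ((n:ℝ) * |x * y| ^ (1/(n:ℝ)))) / x)) x :=
      fun j _ => (BesselAux.prod_hasDerivAt (hνj j) n hn (2*(j:ℝ)/(n:ℝ)) hx hy).const_mul (c j)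
    have hsum := HasDerivAt.fun_sum hder
    have hev : ((eulerR)^[ℓ]
        (fun t : ℝ => besselJ ν ((n:ℝ) * |t * y| ^ (1/(n:ℝ))))) =ᶠ[nhds x]
        (fun t => ∑ j ∈ Finset.Icc 1 ℓ, c j * (|t * y| ^ (2*(j:ℝ)/(n:ℝ)) *
          besselJ (ν + (j:ℝ)) ((n:ℝ) * |t * y| ^ (1/(n:ℝ))))) := by
      filter_upwards [eventually_ne_nhds hx] with t ht
      rw [hc t y (mul_ne_zero ht hy)]
      exact Finset.sum_congr rfl fun j _ => mul_assoc _ _ _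
    have hLHS : (eulerR)^[ℓ+1]
        (fun t : ℝ => besselJ ν ((n:ℝ) * |t * y| ^ (1/(n:ℝ)))) x
        = ∑ j ∈ Finset.Icc 1 ℓ, c j *
            ((2*(j:ℝ)/(n:ℝ)) * (|x * y| ^ (2*(j:ℝ)/(n:ℝ)) *
              besselJ (ν + (j:ℝ)) ((n:ℝ) * |x * y| ^ (1/(n:ℝ))))
            - ((n:ℝ)/(2*(ν + (j:ℝ)+1))) * (|x * y| ^ (2*((j+1:ℕ):ℝ)/(n:ℝ)) *
              besselJ (ν + ((j+1:ℕ):ℝ)) ((n:ℝ) * |x * y| ^ (1/(n:ℝ))))) := by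
      rw [Function.iterate_succ_apply']
      simp only [eulerR]
      rw [hev.deriv_eq, hsum.deriv, Finset.mul_sum]
      refine Finset.sum_congr rfl fun j _ => ?_
      have hpow : |x * y| ^ (2*(j:ℝ)/(n:ℝ)) * |x * y| ^ (2/(n:ℝ))
          = |x * y| ^ (2*((j:ℝ)+1)/(n:ℝ)) := by
        rw [← Real.rpow_add hxy']
        congr 1
        field_simp
      push_cast
      rw [mul_left_comm, mul_comm x, div_mul_cancel₀ _ hx, ← hpow]
      ring
    have hRHS : (∑ j ∈ Finset.Icc 1 (ℓ+1),
        ((if j ≤ ℓ then c j * (2*(j:ℝ)/(n:ℝ)) else 0)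
          + (if 2 ≤ j then -(c (j-1) * ((n:ℝ)/(2*(ν+((j-1:ℕ):ℝ)+1)))) else 0)) *
          |x * y| ^ (2*(j:ℝ)/(n:ℝ)) *
          besselJ (ν + (j:ℝ)) ((n:ℝ) * |x * y| ^ (1/(n:ℝ))))
        = ∑ j ∈ Finset.Icc 1 ℓ, c j *
            ((2*(j:ℝ)/(n:ℝ)) * (|x * y| ^ (2*(j:ℝ)/(n:ℝ)) *
              besselJ (ν + (j:ℝ)) ((n:ℝ) * |x * y| ^ (1/(n:ℝ))))
            - ((n:ℝ)/(2*(ν + (j:ℝ)+1))) * (|x * y| ^ (2*((j+1:ℕ):ℝ)/(n:ℝ)) *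
              besselJ (ν + ((j+1:ℕ):ℝ)) ((n:ℝ) * |x * y| ^ (1/(n:ℝ))))) := by
      rw [Finset.sum_congr rfl fun j _ => mul_assoc _ _ _]
      exact BesselAux.sum_shift hℓ' c (fun j => 2*(j:ℝ)/(n:ℝ))
        (fun j => (n:ℝ)/(2*(ν+(j:ℝ)+1)))
        (fun j => |x * y| ^ (2*(j:ℝ)/(n:ℝ)) *
          besselJ (ν + (j:ℝ)) ((n:ℝ) * |x * y| ^ (1/(n:ℝ))))
    exact hLHS.trans hRHS.symm

end
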